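/- arXiv:1306.6439 — 7 statements merged into one kernel-verified Lean document; each statement's English description precedes it below -/
import Mathlib

section
/- Let A be an associative algebra over a field k of characteristic zero and let T : A → A be a linear map satisfying the Rota–Baxter relation of weight θ: T(a)T(b) = T(T(a)b + aT(b) + θab) for all a, b. Define a ≺ b := aT(b), a ≻ b := T(a)b, and a · b := θab. Then (A, ≺, ≻, ·) satisfies all seven tridendriform axioms: (a≺b)≺c = a≺(b≺c + b≻c + b·c); (a≻b)≺c = a≻(b≺c); a≻(b≻c) = (a≺b + a≻b + a·b)≻c; (a·b)·c = a·(b·c); (a≻b)·c = a≻(b·c); (a≺b)·c = a·(b≻c); (a·b)≺c = a·(b≺c). -/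
/-- A Rota–Baxter operator of weight θ on an associative k-algebra induces a
tridendriform structure via a ≺ b = aT(b), a ≻ b = T(a)b, a · b = θab. -/
theorem rotaBaxter_tridendriform {k A : Type*} [Field k] [CharZero k] [Ring A] [Algebra k A]
    (θ : k) (T : A →ₗ[k] A)
    (hRB : ∀ a b : A, T a * T b = T (T a * b + a * T b + θ • (a * b))) :
    ∀ a b c : A,
      ((a * T b) * T c = a * T ((b * T c) + (T b * c) + θ • (b * c))) ∧
      ((T a * b) * T c = T a * (b * T c)) ∧
      (T a * (T b * c) = T ((a * T b) + (T a * b) + θ • (a * b)) * c) ∧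
      (θ • ((θ • (a * b)) * c) = θ • (a * (θ • (b * c)))) ∧
      (θ • ((T a * b) * c) = T a * (θ • (b * c))) ∧
      (θ • ((a * T b) * c) = θ • (a * (T b * c))) ∧
      ((θ • (a * b)) * T c = θ • (a * (b * T c))) := by
  intro a b c
  refine ⟨?_, ?_, ?_, ?_, ?_, ?_, ?_⟩
  · rw [mul_assoc, hRB b c, add_comm (T b * c)]
  · rw [mul_assoc]
  · rw [add_comm (a * T b), ← hRB a b, mul_assoc]
  · rw [smul_mul_assoc, mul_assoc, mul_smul_comm]
  · rw [mul_assoc, mul_smul_comm]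
  · rw [mul_assoc]
  · rw [smul_mul_assoc, mul_assoc]
end

section
/- In any tridendriform algebra (D, ≺, ≻, ·), the operations a ⪯ b := a ≺ b + a · b together with ≻ form a dendriform algebra: (a⪯b)⪯c = a⪯(b⪯c + b≻c), (a≻b)⪯c = a≻(b⪯c), and a≻(b≻c) = (a⪯b + a≻b)≻c. -/
/-- In a tridendriform algebra, ⪯ := ≺ + · together with ≻ form a dendriform algebra. -/
theorem tridendriform_left_dendriform {k D : Type*} [Field k] [AddCommGroup D] [Module k D]
    (p s d : D →ₗ[k] D →ₗ[k] D)
    (ax1 : ∀ a b c : D, p (p a b) c = p a (p b c + s b c + d b c))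
    (ax2 : ∀ a b c : D, p (s a b) c = s a (p b c))
    (ax3 : ∀ a b c : D, s a (s b c) = s (p a b + s a b + d a b) c)
    (ax4 : ∀ a b c : D, d (d a b) c = d a (d b c))
    (ax5 : ∀ a b c : D, d (s a b) c = s a (d b c))
    (ax6 : ∀ a b c : D, d (p a b) c = d a (s b c))
    (ax7 : ∀ a b c : D, p (d a b) c = d a (p b c)) :
    ∀ a b c : D,
      ((p (p a b + d a b) c + d (p a b + d a b) c)
        = p a ((p b c + d b c) + s b c) + d a ((p b c + d b c) + s b c)) ∧
      ((p (s a b) c + d (s a b) c) = s a (p b c + d b c)) ∧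
      (s a (s b c) = s ((p a b + d a b) + s a b) c) := by
  intro a b c
  refine ⟨?_, ?_, ?_⟩
  · simp only [map_add, LinearMap.add_apply, ax1, ax4, ax6, ax7]
    abel
  · simp only [map_add, LinearMap.add_apply, ax2, ax5]
  · rw [ax3]; congr 1; abel
end

section
/- Let A be an associative algebra and T : A → A a Rota–Baxter operator of weight θ. Then the product a ▷ b := [T(a), b] + θab = T(a)b − bT(a) + θab is left pre-Lie: (a▷b)▷c − a▷(b▷c) = (b▷a)▷c − b▷(a▷c). -/
/-- The pre-Lie product a ▷ b = [T(a),b] + θab from a weight-θ Rota–Baxter operator. -/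
def rbTriangle {k A : Type*} [Field k] [Ring A] [Algebra k A]
    (T : A →ₗ[k] A) (θ : k) (a b : A) : A :=
  T a * b - b * T a + θ • (a * b)

theorem rotaBaxter_preLie {k A : Type*} [Field k] [CharZero k] [Ring A] [Algebra k A]
    (θ : k) (T : A →ₗ[k] A)
    (hRB : ∀ a b : A, T a * T b = T (T a * b + a * T b + θ • (a * b))) :
    ∀ a b c : A,
      rbTriangle T θ (rbTriangle T θ a b) c - rbTriangle T θ a (rbTriangle T θ b c)
      = rbTriangle T θ (rbTriangle T θ b a) c - rbTriangle T θ b (rbTriangle T θ a c) := by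
  have hT : ∀ a b : A, T (T a * b - b * T a + θ • (a * b))
      = T a * T b - T (a * T b) - T (b * T a) := by
    intro a b
    have h := hRB a b
    simp only [map_add, map_sub, map_smul] at h ⊢
    rw [h]; abel
  intro a b c
  simp only [rbTriangle, hT, map_add, map_sub, map_smul, mul_add, add_mul, mul_sub, sub_mul,
    smul_mul_assoc, mul_smul_comm, smul_add, smul_sub, smul_smul, mul_assoc]
  abel
end

section
/- Let A be an associative algebra and T : A → A a Rota–Baxter operator of weight θ. Then the product a ▷' b := [T(a), b] − θba is left pre-Lie: (a▷'b)▷'c − a▷'(b▷'c) = (b▷'a)▷'c − b▷'(a▷'c). -/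
/-- The pre-Lie product a ▷' b = [T(a),b] − θba from a weight-θ Rota–Baxter operator. -/
def rbTriangle' {k A : Type*} [Field k] [Ring A] [Algebra k A]
    (T : A →ₗ[k] A) (θ : k) (a b : A) : A :=
  T a * b - b * T a - θ • (b * a)

theorem rotaBaxter_preLie' {k A : Type*} [Field k] [CharZero k] [Ring A] [Algebra k A]
    (θ : k) (T : A →ₗ[k] A)
    (hRB : ∀ a b : A, T a * T b = T (T a * b + a * T b + θ • (a * b))) :
    ∀ a b c : A,
      rbTriangle' T θ (rbTriangle' T θ a b) c - rbTriangle' T θ a (rbTriangle' T θ b c)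
      = rbTriangle' T θ (rbTriangle' T θ b a) c - rbTriangle' T θ b (rbTriangle' T θ a c) := by
  have e1 : ∀ x y : A, T (T x * y) = T x * T y - T (x * T y) - θ • T (x * y) := by
    intro x y
    have h1 := hRB x y
    rw [map_add, map_add, map_smul] at h1
    rw [h1]; abel
  intro a b c
  simp only [rbTriangle', map_sub, map_smul, sub_mul, mul_sub, smul_sub,
    smul_mul_assoc, mul_smul_comm, smul_smul, mul_assoc, e1]
  module
end

section
/- Let A be an associative algebra and T : A → A a Rota–Baxter operator of any weight θ. Then a ◇ b := [T(a), b] together with the Lie bracket [a,b]_· := θ(ab − ba) gives A the structure of a left post-Lie algebra: (i) a ◇ [b,c]_· = [a ◇ b, c]_· + [b, a ◇ c]_·, and (ii) [a,b]_· ◇ c = a ◇ (b ◇ c) − (a ◇ b) ◇ c − b ◇ (a ◇ c) + (b ◇ a) ◇ c. -/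
/-- a ◇ b := [T(a),b] from a weight-θ Rota–Baxter operator. -/
def rbDiamond {k A : Type*} [Field k] [Ring A] [Algebra k A]
    (T : A →ₗ[k] A) (a b : A) : A :=
  T a * b - b * T a

/-- The Lie bracket [a,b] := θ(ab − ba). -/
def rbBracket {k A : Type*} [Field k] [Ring A] [Algebra k A]
    (θ : k) (a b : A) : A :=
  θ • (a * b - b * a)

/-- A Rota–Baxter operator of weight θ yields a left post-Lie algebra structure. -/
theorem rotaBaxter_postLie {k A : Type*} [Field k] [CharZero k] [Ring A] [Algebra k A]
    (θ : k) (T : A →ₗ[k] A)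
    (hRB : ∀ a b : A, T a * T b = T (T a * b + a * T b + θ • (a * b))) :
    ∀ a b c : A,
      (rbDiamond T a (rbBracket (A := A) θ b c)
        = rbBracket (A := A) θ (rbDiamond T a b) c + rbBracket (A := A) θ b (rbDiamond T a c)) ∧
      (rbDiamond T (rbBracket (A := A) θ a b) c
        = rbDiamond T a (rbDiamond T b c) - rbDiamond T (rbDiamond T a b) c
          - rbDiamond T b (rbDiamond T a c) + rbDiamond T (rbDiamond T b a) c) := by
  have hT : ∀ a b : A, T (θ • (a * b)) = T a * T b - T (T a * b) - T (a * T b) := by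
    intro a b
    rw [hRB a b, map_add, map_add]
    abel
  intro a b c
  constructor
  · simp only [rbDiamond, rbBracket, smul_sub, sub_mul, mul_sub, smul_mul_assoc,
      mul_smul_comm, mul_assoc]
    abel
  · simp only [rbDiamond, rbBracket, smul_sub, map_sub, hT, map_sub, sub_mul, mul_sub]
    noncomm_ring
end

section
/- Let σ : {1,…,n} ↠ {1,…,r} and τ : {1,…,m} ↠ {1,…,p} be surjections and N ≥ n+m. Then T_σ(N) × T_τ(N) equals the disjoint union of T_{FG}(N) over all pairs of maps F : {1,…,n} → ℕ₊, G : {1,…,m} → ℕ₊ such that std(F) = σ, std(G) = τ, and the juxtaposition FG : {1,…,n+m} → ℕ₊ is a standard (surjective onto an initial interval) map. -/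
/-- σ is a standard map, i.e. a surjection onto some initial interval {1,…,r}. -/
def IsStandard {n : ℕ} (σ : Fin n → ℕ) : Prop :=
  ∃ r : ℕ, 1 ≤ r ∧ Set.range σ = Set.Icc 1 r

/-- F takes positive values and its standardization is σ. -/
def StdEq {n : ℕ} (F σ : Fin n → ℕ) : Prop :=
  (∀ i, 1 ≤ F i) ∧ ∀ i j, (F i < F j ↔ σ i < σ j)

/-- The point s of the hypercube {0,…,N−1}^n lies on the partial diagonal T_σ(N). -/
def InDiag {n : ℕ} (N : ℕ) (σ : Fin n → ℕ) (s : Fin n → ℕ) : Prop :=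
  (∀ i, s i < N) ∧ ∀ i j, (s j < s i ↔ σ i < σ j) ∧ (s i = s j ↔ σ i = σ j)

namespace DiagAux

variable {k : ℕ}

/-- Rank of `u i` from the top: number of distinct values of `u` that are `≥ u i`. -/
def rk (u : Fin k → ℕ) (i : Fin k) : ℕ :=
  ((Finset.univ.image u).filter (fun v => u i ≤ v)).card

lemma rk_pos (u : Fin k → ℕ) (i : Fin k) : 1 ≤ rk u i :=
  Finset.card_pos.mpr ⟨u i, by simp⟩

lemma rk_lt (u : Fin k → ℕ) (i j : Fin k) : rk u i < rk u j ↔ u j < u i := by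
  constructor
  · intro h
    by_contra hc
    push_neg at hc
    have hsub : (Finset.univ.image u).filter (fun v => u j ≤ v) ⊆
        (Finset.univ.image u).filter (fun v => u i ≤ v) := by
      intro x hx
      simp only [Finset.mem_filter] at hx ⊢
      exact ⟨hx.1, le_trans hc hx.2⟩
    exact absurd (Finset.card_le_card hsub) (by unfold rk at h; omega)
  · intro h
    apply Finset.card_lt_card
    constructor
    · intro x hx
      simp only [Finset.mem_filter] at hx ⊢
      exact ⟨hx.1, le_trans h.le hx.2⟩
    · intro hsub
      have : u j ∈ (Finset.univ.image u).filter (fun v => u j ≤ v) := by simp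
      have := hsub this
      simp only [Finset.mem_filter] at this
      omega

lemma rk_eq (u : Fin k → ℕ) (i j : Fin k) : rk u i = rk u j ↔ u i = u j := by
  have h1 := rk_lt u i j
  have h2 := rk_lt u j i
  omega

lemma range_rk (u : Fin k → ℕ) (hk : 0 < k) :
    Set.range (rk u) = Set.Icc 1 (Finset.univ.image u).card := by
  set T := Finset.univ.image u with hT
  set g : ℕ → ℕ := fun v => (T.filter (fun w => v ≤ w)).card with hg
  have step1 : Finset.univ.image (rk u) = T.image g := by
    rw [hT, Finset.image_image]
    rfl
  have ginj : Set.InjOn g ↑T := by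
    intro v hv w hw hvw
    by_contra hne
    rcases Nat.lt_or_ge v w with hlt | hge
    · have hsub : T.filter (fun x => w ≤ x) ⊂ T.filter (fun x => v ≤ x) := by
        constructor
        · intro x hx
          simp only [Finset.mem_filter] at hx ⊢
          exact ⟨hx.1, le_trans hlt.le hx.2⟩
        · intro hsub
          have hmem : v ∈ T.filter (fun x => v ≤ x) := by
            simp only [Finset.mem_filter]
            exact ⟨hv, le_refl v⟩
          have := hsub hmem
          simp only [Finset.mem_filter] at this
          omega
      have := Finset.card_lt_card hsub
      simp only [hg] at hvw
      omega
    · have hlt : w < v := by omega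
      have hsub : T.filter (fun x => v ≤ x) ⊂ T.filter (fun x => w ≤ x) := by
        constructor
        · intro x hx
          simp only [Finset.mem_filter] at hx ⊢
          exact ⟨hx.1, le_trans hlt.le hx.2⟩
        · intro hsub
          have hmem : w ∈ T.filter (fun x => w ≤ x) := by
            simp only [Finset.mem_filter]
            exact ⟨hw, le_refl w⟩
          have := hsub hmem
          simp only [Finset.mem_filter] at this
          omega
      have := Finset.card_lt_card hsub
      simp only [hg] at hvw
      omega
  have step2 : T.image g = Finset.Icc 1 T.card := by
    apply Finset.eq_of_subset_of_card_le
    · intro c hc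
      simp only [Finset.mem_image] at hc
      obtain ⟨v, hv, rfl⟩ := hc
      simp only [Finset.mem_Icc]
      constructor
      · exact Finset.card_pos.mpr ⟨v, by simp only [Finset.mem_filter]; exact ⟨hv, le_refl v⟩⟩
      · exact Finset.card_le_card (Finset.filter_subset _ _)
    · rw [Nat.card_Icc]
      rw [Finset.card_image_of_injOn ginj]
      omega
  rw [← Set.image_univ, ← Finset.coe_univ, ← Finset.coe_image, step1, step2, Finset.coe_Icc]

lemma isStandard_rk (u : Fin k → ℕ) (hk : 0 < k) : IsStandard (rk u) := by
  refine ⟨(Finset.univ.image u).card, ?_, range_rk u hk⟩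
  have : (⟨0, hk⟩ : Fin k) ∈ (Finset.univ : Finset (Fin k)) := Finset.mem_univ _
  exact Finset.card_pos.mpr ⟨u ⟨0, hk⟩, Finset.mem_image_of_mem u this⟩

lemma inDiag_rk {N : ℕ} (u : Fin k → ℕ) (hu : ∀ i, u i < N) : InDiag N (rk u) u :=
  ⟨hu, fun i j => ⟨(rk_lt u i j).symm, (rk_eq u i j).symm⟩⟩

lemma card_image_le_of_ker {ι : Type*} [DecidableEq ι] (A : Finset ι) (f g : ι → ℕ)
    (h : ∀ i ∈ A, ∀ j ∈ A, f i = f j → g i = g j) :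
    (A.image g).card ≤ (A.image f).card := by
  classical
  set φ : ℕ → ℕ := fun v => if hv : ∃ j, j ∈ A ∧ f j = v then g hv.choose else 0 with hφ
  have key : ∀ i ∈ A, φ (f i) = g i := by
    intro i hi
    have hv : ∃ j, j ∈ A ∧ f j = f i := ⟨i, hi, rfl⟩
    simp only [hφ, dif_pos hv]
    exact h _ hv.choose_spec.1 _ hi hv.choose_spec.2
  have himg : (A.image f).image φ = A.image g := by
    rw [Finset.image_image]
    exact Finset.image_congr (fun i hi => key i hi)
  calc (A.image g).card = ((A.image f).image φ).card := by rw [himg]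
    _ ≤ (A.image f).card := Finset.card_image_le

lemma image_filter_le {ρ : Fin k → ℕ} {r : ℕ} (hr : Set.range ρ = Set.Icc 1 r) (i : Fin k) :
    (Finset.univ.filter (fun j => ρ j ≤ ρ i)).image ρ = Finset.Icc 1 (ρ i) := by
  have hmem : ∀ j, 1 ≤ ρ j ∧ ρ j ≤ r := by
    intro j
    have : ρ j ∈ Set.Icc 1 r := hr ▸ Set.mem_range_self j
    exact this
  ext c
  simp only [Finset.mem_image, Finset.mem_filter, Finset.mem_univ, true_and, Finset.mem_Icc]
  constructor
  · rintro ⟨j, hj, rfl⟩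
    exact ⟨(hmem j).1, hj⟩
  · rintro ⟨h1, h2⟩
    have : c ∈ Set.range ρ := by
      rw [hr]
      exact ⟨h1, le_trans h2 (hmem i).2⟩
    obtain ⟨j, rfl⟩ := this
    exact ⟨j, h2, rfl⟩

lemma std_unique {ρ ρ' : Fin k → ℕ} (h : IsStandard ρ) (h' : IsStandard ρ')
    (hlt : ∀ i j, ρ i < ρ j ↔ ρ' i < ρ' j) : ρ = ρ' := by
  classical
  obtain ⟨r, _, hr⟩ := h
  obtain ⟨r', _, hr'⟩ := h'
  have heq : ∀ i j, ρ i = ρ j ↔ ρ' i = ρ' j := by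
    intro i j
    have h1 := hlt i j
    have h2 := hlt j i
    omega
  have hle : ∀ i j, ρ j ≤ ρ i ↔ ρ' j ≤ ρ' i := by
    intro i j
    have h1 := hlt i j
    have h2 := hlt j i
    omega
  funext i
  set A := Finset.univ.filter (fun j => ρ j ≤ ρ i) with hA
  have hA' : A = Finset.univ.filter (fun j => ρ' j ≤ ρ' i) := by
    apply Finset.filter_congr
    intro j _
    simpa using hle i j
  have e1 : (A.image ρ).card = ρ i := by
    rw [hA, image_filter_le hr i, Nat.card_Icc]
    omega
  have e2 : (A.image ρ').card = ρ' i := by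
    rw [hA', image_filter_le hr' i, Nat.card_Icc]
    omega
  have c1 := card_image_le_of_ker A ρ ρ' (fun a _ b _ hab => (heq a b).mp hab)
  have c2 := card_image_le_of_ker A ρ' ρ (fun a _ b _ hab => (heq a b).mpr hab)
  omega

end DiagAux

open DiagAux in
/-- T_σ(N) × T_τ(N) is the disjoint union of the T_{FG}(N) over pairs (F,G) with
std(F) = σ, std(G) = τ, and FG standard. -/
theorem diag_product_partition (n m N : ℕ) (hn : 1 ≤ n) (hm : 1 ≤ m) (hN : n + m ≤ N)
    (σ : Fin n → ℕ) (τ : Fin m → ℕ) (hσ : IsStandard σ) (hτ : IsStandard τ)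
    (s : Fin n → ℕ) (t : Fin m → ℕ) :
    (InDiag N σ s ∧ InDiag N τ t) ↔
      ∃! FG : (Fin n → ℕ) × (Fin m → ℕ),
        StdEq FG.1 σ ∧ StdEq FG.2 τ ∧ IsStandard (Fin.append FG.1 FG.2) ∧
        InDiag N (Fin.append FG.1 FG.2) (Fin.append s t) := by
  constructor
  · rintro ⟨hs, ht⟩
    set u : Fin (n + m) → ℕ := Fin.append s t with hu
    set ρ : Fin (n + m) → ℕ := rk u with hρ
    set F : Fin n → ℕ := fun i => ρ (Fin.castAdd m i) with hF
    set G : Fin m → ℕ := fun j => ρ (Fin.natAdd n j) with hG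
    have happ : Fin.append F G = ρ := by
      funext x
      cases x using Fin.addCases with
      | left i => rw [Fin.append_left]
      | right j => rw [Fin.append_right]
    have huN : ∀ x, u x < N := by
      intro x
      cases x using Fin.addCases with
      | left i => rw [hu, Fin.append_left]; exact hs.1 i
      | right j => rw [hu, Fin.append_right]; exact ht.1 j
    refine ⟨(F, G), ⟨?_, ?_, ?_, ?_⟩, ?_⟩
    · refine ⟨fun i => rk_pos u _, fun i j => ?_⟩
      rw [hF]
      simp only
      rw [hρ, rk_lt]
      rw [hu, Fin.append_left, Fin.append_left]
      exact (hs.2 i j).1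
    · refine ⟨fun i => rk_pos u _, fun i j => ?_⟩
      rw [hG]
      simp only
      rw [hρ, rk_lt]
      rw [hu, Fin.append_right, Fin.append_right]
      exact (ht.2 i j).1
    · rw [happ]
      exact isStandard_rk u (by omega)
    · show InDiag N (Fin.append F G) u
      rw [happ, hρ]
      exact inDiag_rk u huN
    · rintro ⟨F', G'⟩ ⟨hF', hG', hstd', hdiag'⟩
      have hmain : Fin.append F' G' = ρ := by
        apply std_unique hstd'
        · rw [hρ]; exact isStandard_rk u (by omega)
        · intro i j
          rw [hρ, rk_lt]
          exact ((hdiag'.2 i j).1).symm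
      have hF'' : F' = F := by
        funext i
        have := congrFun hmain (Fin.castAdd m i)
        rwa [Fin.append_left] at this
      have hG'' : G' = G := by
        funext j
        have := congrFun hmain (Fin.natAdd n j)
        rwa [Fin.append_right] at this
      rw [Prod.mk.injEq]
      exact ⟨hF'', hG''⟩
  · rintro ⟨⟨F, G⟩, ⟨hF, hG, _, hdiag⟩, _⟩
    dsimp only at hF hG hdiag
    constructor
    · refine ⟨fun i => ?_, fun i j => ?_⟩
      · have := hdiag.1 (Fin.castAdd m i)
        rwa [Fin.append_left] at this
      · have h1 := hdiag.2 (Fin.castAdd m i) (Fin.castAdd m j)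
        simp only [Fin.append_left] at h1
        have h2 := hF.2 i j
        have h3 := hF.2 j i
        obtain ⟨h1a, h1b⟩ := h1
        exact ⟨by omega, by omega⟩
    · refine ⟨fun i => ?_, fun i j => ?_⟩
      · have := hdiag.1 (Fin.natAdd n i)
        rwa [Fin.append_right] at this
      · have h1 := hdiag.2 (Fin.natAdd n i) (Fin.natAdd n j)
        simp only [Fin.append_right] at h1
        have h2 := hG.2 i j
        have h3 := hG.2 j i
        obtain ⟨h1a, h1b⟩ := h1
        exact ⟨by omega, by omega⟩
end

section
/- With notation as before, the subset T_σ(N) ⋉ T_τ(N) := {(s̲, t̲) ∈ T_σ(N) × T_τ(N) : min s̲ < min t̲} equals the disjoint union of T_{FG}(N) over all pairs (F, G) with std(F) = σ, std(G) = τ, FG standard, and max F > max G. -/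
/-- The rank-from-the-top of `x` in the finite set `S`. -/
def rkv (S : Finset ℕ) (x : ℕ) : ℕ := 1 + (S.filter (fun y => x < y)).card

lemma rkv_le {S : Finset ℕ} {x y : ℕ} (h : x ≤ y) : rkv S y ≤ rkv S x := by
  have hs : S.filter (fun z => y < z) ⊆ S.filter (fun z => x < z) := by
    intro z hz
    simp only [Finset.mem_filter] at *
    exact ⟨hz.1, lt_of_le_of_lt h hz.2⟩
  have := Finset.card_le_card hs
  unfold rkv; omega

lemma rkv_lt {S : Finset ℕ} {x y : ℕ} (h : x < y) (hy : y ∈ S) : rkv S y < rkv S x := by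
  have hss : S.filter (fun z => y < z) ⊂ S.filter (fun z => x < z) := by
    constructor
    · intro z hz
      simp only [Finset.mem_filter] at *
      exact ⟨hz.1, lt_trans h hz.2⟩
    · intro hsub
      have : y ∈ S.filter (fun z => x < z) := Finset.mem_filter.2 ⟨hy, h⟩
      have := Finset.mem_filter.1 (hsub this)
      exact lt_irrefl y this.2
  have := Finset.card_lt_card hss
  unfold rkv; omega

lemma rkv_lt_iff {S : Finset ℕ} {x y : ℕ} (hx : x ∈ S) : rkv S x < rkv S y ↔ y < x := by
  constructor
  · intro h
    by_contra hc
    exact absurd h (not_lt.2 (rkv_le (not_lt.1 hc)))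
  · exact fun h => rkv_lt h hx

lemma rkv_eq_iff {S : Finset ℕ} {x y : ℕ} (hx : x ∈ S) (hy : y ∈ S) :
    rkv S x = rkv S y ↔ x = y := by
  constructor
  · intro h
    rcases lt_trichotomy x y with hc | hc | hc
    · exact absurd ((rkv_lt_iff hy).2 hc) (by omega)
    · exact hc
    · exact absurd ((rkv_lt_iff hx).2 hc) (by omega)
  · rintro rfl; rfl

lemma one_le_rkv (S : Finset ℕ) (x : ℕ) : 1 ≤ rkv S x := Nat.le_add_right 1 _

lemma rkv_le_card {S : Finset ℕ} {x : ℕ} (hx : x ∈ S) : rkv S x ≤ S.card := by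
  have hss : S.filter (fun z => x < z) ⊂ S := by
    refine ⟨Finset.filter_subset _ _, fun hsub => ?_⟩
    have := Finset.mem_filter.1 (hsub hx)
    exact lt_irrefl x this.2
  have := Finset.card_lt_card hss
  unfold rkv; omega

lemma image_rkv (S : Finset ℕ) : S.image (rkv S) = Finset.Icc 1 S.card := by
  apply Finset.eq_of_subset_of_card_le
  · intro v hv
    rcases Finset.mem_image.1 hv with ⟨x, hx, rfl⟩
    exact Finset.mem_Icc.2 ⟨one_le_rkv S x, rkv_le_card hx⟩
  · rw [Nat.card_Icc, Finset.card_image_of_injOn fun a ha b hb h => (rkv_eq_iff ha hb).1 h]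
    omega

lemma std_mono_le {k r : ℕ} {σ σ' : Fin k → ℕ} (hr : Set.range σ = Set.Icc 1 r)
    (h1 : ∀ i, 1 ≤ σ' i) (hord : ∀ i j, σ i < σ j ↔ σ' i < σ' j) : ∀ i, σ i ≤ σ' i := by
  have key : ∀ v : ℕ, ∀ i, σ' i = v → σ i ≤ σ' i := by
    intro v
    induction v using Nat.strong_induction_on with
    | _ v IH =>
      intro i hv
      by_contra hc
      push_neg at hc
      have hσi : σ i ∈ Set.Icc 1 r := hr ▸ Set.mem_range_self i
      have h2 : 2 ≤ σ i := by have := h1 i; omega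
      have hmem : σ i - 1 ∈ Set.range σ := by
        rw [hr]
        simp only [Set.mem_Icc] at hσi ⊢
        omega
      rcases hmem with ⟨j, hj⟩
      have hjlt : σ j < σ i := by omega
      have := (hord j i).1 hjlt
      have := IH (σ' j) (by omega) j rfl
      omega
  exact fun i => key (σ' i) i rfl

lemma std_unique {k : ℕ} {σ σ' : Fin k → ℕ} (hσ : IsStandard σ) (hσ' : IsStandard σ')
    (hord : ∀ i j, σ i < σ j ↔ σ' i < σ' j) : σ = σ' := by
  obtain ⟨r, -, hr⟩ := hσ
  obtain ⟨r', -, hr'⟩ := hσ'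
  have h1 : ∀ i, 1 ≤ σ' i := fun i => (Set.mem_Icc.1 (hr' ▸ Set.mem_range_self i)).1
  have h1' : ∀ i, 1 ≤ σ i := fun i => (Set.mem_Icc.1 (hr ▸ Set.mem_range_self i)).1
  have hle := std_mono_le hr h1 hord
  have hge := std_mono_le hr' h1' (fun i j => (hord i j).symm)
  exact funext fun i => le_antisymm (hle i) (hge i)

lemma image_append {n m : ℕ} (s : Fin n → ℕ) (t : Fin m → ℕ) :
    Finset.univ.image (Fin.append s t) = Finset.univ.image s ∪ Finset.univ.image t := by
  ext a
  simp only [Finset.mem_image, Finset.mem_union, Finset.mem_univ, true_and]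
  constructor
  · rintro ⟨i, rfl⟩
    refine Fin.addCases (fun i => ?_) (fun i => ?_) i
    · exact Or.inl ⟨i, (Fin.append_left s t i).symm⟩
    · exact Or.inr ⟨i, (Fin.append_right s t i).symm⟩
  · rintro (⟨i, rfl⟩ | ⟨j, rfl⟩)
    · exact ⟨Fin.castAdd m i, Fin.append_left s t i⟩
    · exact ⟨Fin.natAdd n j, Fin.append_right s t j⟩

/-- T_σ(N) ⋉ T_τ(N) = {(s,t) : min s < min t} is the disjoint union of the T_{FG}(N)
over pairs (F,G) with std(F) = σ, std(G) = τ, FG standard and max F > max G. -/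
theorem diag_product_ltimes (n m N : ℕ) (hn : 1 ≤ n) (hm : 1 ≤ m) (hN : n + m ≤ N)
    (σ : Fin n → ℕ) (τ : Fin m → ℕ) (hσ : IsStandard σ) (hτ : IsStandard τ)
    (s : Fin n → ℕ) (t : Fin m → ℕ) :
    (InDiag N σ s ∧ InDiag N τ t ∧ (∃ i : Fin n, ∀ j : Fin m, s i < t j)) ↔
      ∃! FG : (Fin n → ℕ) × (Fin m → ℕ),
        StdEq FG.1 σ ∧ StdEq FG.2 τ ∧ IsStandard (Fin.append FG.1 FG.2) ∧
        (∃ i : Fin n, ∀ j : Fin m, FG.2 j < FG.1 i) ∧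
        InDiag N (Fin.append FG.1 FG.2) (Fin.append s t) := by
  constructor
  · rintro ⟨hs, ht, i₀, hi₀⟩
    set u : Fin (n + m) → ℕ := Fin.append s t with hu
    set S : Finset ℕ := Finset.univ.image s ∪ Finset.univ.image t with hSdef
    have hS : Finset.univ.image u = S := image_append s t
    set F : Fin n → ℕ := fun i => rkv S (s i) with hF
    set G : Fin m → ℕ := fun j => rkv S (t j) with hG
    have hsS : ∀ i, s i ∈ S := fun i =>
      Finset.mem_union_left _ (Finset.mem_image_of_mem s (Finset.mem_univ i))
    have htS : ∀ j, t j ∈ S := fun j =>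
      Finset.mem_union_right _ (Finset.mem_image_of_mem t (Finset.mem_univ j))
    have huS : ∀ k, u k ∈ S := fun k => hS ▸ Finset.mem_image_of_mem u (Finset.mem_univ k)
    have happ : Fin.append F G = fun k => rkv S (u k) := by
      funext k
      refine Fin.addCases (fun i => ?_) (fun j => ?_) k
      · rw [Fin.append_left]
        simp only [hu, Fin.append_left, hF]
      · rw [Fin.append_right]
        simp only [hu, Fin.append_right, hG]
    have hScard : 1 ≤ S.card := by
      have : s ⟨0, hn⟩ ∈ S := hsS _
      exact Finset.card_pos.2 ⟨_, this⟩
    have hρstd : IsStandard (Fin.append F G) := by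
      refine ⟨S.card, hScard, ?_⟩
      rw [happ]
      have h1 : Set.range (fun k => rkv S (u k)) = ↑(Finset.univ.image (fun k => rkv S (u k))) := by
        rw [Finset.coe_image, Finset.coe_univ, Set.image_univ]
      rw [h1, show Finset.univ.image (fun k => rkv S (u k)) = (Finset.univ.image u).image (rkv S)
        from (Finset.image_image (f := u) (g := rkv S)).symm, hS, image_rkv, Finset.coe_Icc]
    have hρdiag : InDiag N (Fin.append F G) u := by
      rw [happ]
      constructor
      · intro k
        refine Fin.addCases (fun i => ?_) (fun j => ?_) k
        · rw [hu, Fin.append_left]; exact hs.1 i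
        · rw [hu, Fin.append_right]; exact ht.1 j
      · intro k l
        exact ⟨(rkv_lt_iff (huS k)).symm, (rkv_eq_iff (huS k) (huS l)).symm⟩
    refine ⟨(F, G), ⟨⟨fun i => one_le_rkv S (s i), fun i j =>
        (rkv_lt_iff (hsS i)).trans (hs.2 i j).1⟩,
      ⟨fun j => one_le_rkv S (t j), fun i j => (rkv_lt_iff (htS i)).trans (ht.2 i j).1⟩,
      hρstd, ⟨i₀, fun j => rkv_lt (hi₀ j) (htS j)⟩, hρdiag⟩, ?_⟩
    · rintro ⟨F', G'⟩ ⟨hF', hG', hstd', hmax', hdiag'⟩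
      have hord : ∀ k l, Fin.append F' G' k < Fin.append F' G' l ↔
          Fin.append F G k < Fin.append F G l := by
        intro k l
        rw [← (hdiag'.2 k l).1, ← (hρdiag.2 k l).1]
      have heq : Fin.append F' G' = Fin.append F G := std_unique hstd' hρstd hord
      have hF'F : F' = F := by
        funext i
        have := congrFun heq (Fin.castAdd m i)
        rwa [Fin.append_left, Fin.append_left] at this
      have hG'G : G' = G := by
        funext j
        have := congrFun heq (Fin.natAdd n j)
        rwa [Fin.append_right, Fin.append_right] at this
      simp [hF'F, hG'G]
  · rintro ⟨⟨F, G⟩, ⟨hF, hG, hstd, ⟨i₀, hmax⟩, hdiag⟩, -⟩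
    refine ⟨⟨fun i => ?_, fun i j => ?_⟩, ⟨fun j => ?_, fun i j => ?_⟩, ⟨i₀, fun j => ?_⟩⟩
    · have := hdiag.1 (Fin.castAdd m i)
      rwa [Fin.append_left] at this
    · have h1 := (hdiag.2 (Fin.castAdd m i) (Fin.castAdd m j)).1
      have h2 := (hdiag.2 (Fin.castAdd m i) (Fin.castAdd m j)).2
      rw [Fin.append_left, Fin.append_left, Fin.append_left, Fin.append_left] at h1 h2
      have h3 := hF.2 i j
      have h4 := hF.2 j i
      constructor
      · omega
      · omega
    · have := hdiag.1 (Fin.natAdd n j)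
      rwa [Fin.append_right] at this
    · have h1 := (hdiag.2 (Fin.natAdd n i) (Fin.natAdd n j)).1
      have h2 := (hdiag.2 (Fin.natAdd n i) (Fin.natAdd n j)).2
      rw [Fin.append_right, Fin.append_right, Fin.append_right, Fin.append_right] at h1 h2
      have h3 := hG.2 i j
      have h4 := hG.2 j i
      constructor
      · omega
      · omega
    · have h1 := (hdiag.2 (Fin.natAdd n j) (Fin.castAdd m i₀)).1
      rw [Fin.append_left, Fin.append_right, Fin.append_left, Fin.append_right] at h1
      exact h1.2 (hmax j)
end
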